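/- For every prime p > 3, the sum ∑_{k=0}^{p-1} C(p+k, k)^2·C(p-1, k)^2 is congruent to p modulo 2p^4. -/

import Mathlib

open Finset

-- step recurrence in ℕ
lemma step_id (p k : ℕ) :
    Nat.choose (p+(k+1)) (k+1) * Nat.choose (p-1) (k+1) * ((k+1)*(k+1)) =
    Nat.choose (p+k) k * Nat.choose (p-1) k * ((p+k+1)*((p-1)-k)) := by
  have h1 : (p+k+1) * Nat.choose (p+k) k = Nat.choose (p+k+1) (k+1) * (k+1) :=
    Nat.add_one_mul_choose_eq (p+k) k
  have h2 : Nat.choose (p-1) (k+1) * (k+1) = Nat.choose (p-1) k * ((p-1) - k) :=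
    Nat.choose_succ_right_eq (p-1) k
  calc Nat.choose (p+(k+1)) (k+1) * Nat.choose (p-1) (k+1) * ((k+1)*(k+1))
      = (Nat.choose (p+k+1) (k+1) * (k+1)) * (Nat.choose (p-1) (k+1) * (k+1)) := by
        rw [show p+(k+1) = p+k+1 from by omega]; ring
    _ = ((p+k+1) * Nat.choose (p+k) k) * (Nat.choose (p-1) k * ((p-1)-k)) := by rw [h1, h2]
    _ = _ := by ring

-- parity identity
lemma key_id2 (p k : ℕ) (hp : 1 ≤ p) (hk : k + 1 ≤ p) :
    p * (Nat.choose (p+k) k * Nat.choose (p-1) k) =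
    (2*k+1) * Nat.choose (2*k) k * Nat.choose (p+k) (2*k+1) := by
  have h1 : (2*k+1) * Nat.choose (2*k) k = Nat.choose (2*k+1) (k+1) * (k+1) :=
    Nat.add_one_mul_choose_eq (2*k) k
  have h2 : Nat.choose (2*k+1) (k+1) = Nat.choose (2*k+1) k := by
    rw [← Nat.choose_symm (by omega : k+1 ≤ 2*k+1), show 2*k+1-(k+1) = k from by omega]
  have h3 : Nat.choose (p+k) (2*k+1) * Nat.choose (2*k+1) k
      = Nat.choose (p+k) k * Nat.choose p (k+1) := by
    have := Nat.choose_mul (n := p+k) (show k ≤ 2*k+1 by omega)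
    rwa [show p+k-k = p from by omega, show 2*k+1-k = k+1 from by omega] at this
  have h4 : p * Nat.choose (p-1) k = Nat.choose p (k+1) * (k+1) := by
    have := Nat.add_one_mul_choose_eq (p-1) k
    rwa [show p-1+1 = p from by omega] at this
  calc p * (Nat.choose (p+k) k * Nat.choose (p-1) k)
      = Nat.choose (p+k) k * (p * Nat.choose (p-1) k) := by ring
    _ = Nat.choose (p+k) k * (Nat.choose p (k+1) * (k+1)) := by rw [h4]
    _ = (Nat.choose (p+k) k * Nat.choose p (k+1)) * (k+1) := by ring
    _ = (Nat.choose (p+k) (2*k+1) * Nat.choose (2*k+1) k) * (k+1) := by rw [← h3]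
    _ = (Nat.choose (2*k+1) (k+1) * (k+1)) * Nat.choose (p+k) (2*k+1) := by rw [h2]; ring
    _ = _ := by rw [← h1]

lemma central_even (m : ℕ) : 2 ∣ Nat.choose (2*(m+1)) (m+1) := by
  have h : Nat.choose (2*m+1+1) (m+1) = Nat.choose (2*m+1) m + Nat.choose (2*m+1) (m+1) :=
    Nat.choose_succ_succ (2*m+1) m
  have h2 : Nat.choose (2*m+1) (m+1) = Nat.choose (2*m+1) m := by
    rw [← Nat.choose_symm (by omega : m+1 ≤ 2*m+1), show 2*m+1-(m+1) = m from by omega]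
  rw [show 2*(m+1) = 2*m+1+1 from by omega, h, h2]
  omega

lemma term_even (p k : ℕ) (hp : p.Prime) (hp3 : 3 < p) (hk : 1 ≤ k) (hkp : k + 1 ≤ p) :
    2 ∣ Nat.choose (p+k) k * Nat.choose (p-1) k := by
  obtain ⟨m, rfl⟩ : ∃ m, k = m + 1 := ⟨k - 1, by omega⟩
  have h2 : 2 ∣ p * (Nat.choose (p+(m+1)) (m+1) * Nat.choose (p-1) (m+1)) := by
    rw [key_id2 p (m+1) (by omega) hkp]
    exact Dvd.dvd.mul_right (Dvd.dvd.mul_left (central_even m) _) _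
  rcases (Nat.Prime.dvd_mul Nat.prime_two).mp h2 with h | h
  · exfalso; have := (Nat.prime_dvd_prime_iff_eq Nat.prime_two hp).mp h; omega
  · exact h

lemma ker_gen (n m c : ℕ) [NeZero n] (hm : m ∣ n) (hc : m * c = n) (x : ZMod n)
    (h : ZMod.castHom hm (ZMod m) x = 0) : (c : ZMod n) * x = 0 := by
  have hx : ((x.val : ℕ) : ZMod n) = x := ZMod.natCast_zmod_val x
  have h2 : ((x.val : ℕ) : ZMod m) = 0 := by
    rw [← h, ← hx]; simp [map_natCast]
  obtain ⟨t, ht⟩ := (ZMod.natCast_eq_zero_iff _ _).mp h2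
  calc (c : ZMod n) * x = ((c * (m * t) : ℕ) : ZMod n) := by rw [← hx, ← ht]; push_cast; ring
    _ = ((n * t : ℕ) : ZMod n) := by rw [show c * (m*t) = (m*c)*t from by ring, hc]
    _ = 0 := by rw [Nat.cast_mul, ZMod.natCast_self, zero_mul]

lemma cast_inv {n m : ℕ} (f : ZMod n →+* ZMod m) (j : ℕ) (hj : IsUnit (j : ZMod n)) :
    f ((j : ZMod n)⁻¹) = ((j : ZMod m))⁻¹ := by
  symm
  apply ZMod.inv_eq_of_mul_eq_one
  have h1 : ((j : ZMod n) * (j : ZMod n)⁻¹) = 1 := ZMod.mul_inv_of_unit _ hj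
  calc (j : ZMod m) * f ((j : ZMod n)⁻¹) = f ((j : ZMod n) * (j : ZMod n)⁻¹) := by
        rw [map_mul, map_natCast]
    _ = 1 := by rw [h1, map_one]

lemma unit_of_not_dvd (p a j : ℕ) (hp : p.Prime) (hj : ¬ p ∣ j) : IsUnit (j : ZMod (p^a)) := by
  rw [ZMod.isUnit_iff_coprime]
  exact Nat.Coprime.pow_right _ (Nat.coprime_comm.mp (hp.coprime_iff_not_dvd.mpr hj))

lemma not_dvd_of_Icc (p j : ℕ) (h1 : 1 ≤ j) (h2 : j ≤ p - 1) (hp : 1 < p) : ¬ p ∣ j := by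
  intro h; have := Nat.le_of_dvd (by omega) h; omega

lemma sum_zmod_split {M : Type*} [AddCommMonoid M] (n : ℕ) [NeZero n] (hn : 1 < n)
    (g : ZMod n → M) :
    ∑ x : ZMod n, g x = g 0 + ∑ j ∈ Icc 1 (n-1), g (j : ZMod n) := by
  have h : ∑ j ∈ Icc 1 (n-1), g (j : ZMod n) = ∑ x ∈ univ.erase (0 : ZMod n), g x := by
    refine Finset.sum_nbij' (fun j => (j : ZMod n)) (fun x : ZMod n => x.val) ?_ ?_ ?_ ?_ ?_
    · intro a ha
      simp only [mem_Icc] at ha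
      refine Finset.mem_erase.mpr ⟨?_, Finset.mem_univ _⟩
      intro h0
      have := Nat.le_of_dvd (by omega) ((ZMod.natCast_eq_zero_iff a n).mp h0)
      omega
    · intro x hx
      simp only [Finset.mem_erase] at hx
      simp only [mem_Icc]
      have h1 : x.val < n := ZMod.val_lt x
      have h2 : x.val ≠ 0 := by
        intro h0
        exact hx.1 (by rw [← ZMod.natCast_zmod_val x, h0, Nat.cast_zero])
      omega
    · intro a ha
      simp only [mem_Icc] at ha
      exact ZMod.val_natCast_of_lt (by omega)
    · intro x hx; exact ZMod.natCast_zmod_val x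
    · intro a ha; rfl
  rw [h, ← Finset.sum_erase_add _ _ (Finset.mem_univ (0:ZMod n)), add_comm]

lemma sum_sq_inv_zero (p : ℕ) (hp : p.Prime) (hp3 : 3 < p) :
    ∑ j ∈ Icc 1 (p-1), ((j : ZMod p)⁻¹)^2 = 0 := by
  haveI : Fact p.Prime := ⟨hp⟩
  have h2ne : (2 : ZMod p) ≠ 0 := by
    have h : ¬ ((p:ℕ) ∣ 2) := fun h => by have := Nat.le_of_dvd (by norm_num) h; omega
    have := (not_iff_not.mpr (ZMod.natCast_eq_zero_iff 2 p)).mpr h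
    simpa using this
  have h3ne : (3 : ZMod p) ≠ 0 := by
    have h : ¬ ((p:ℕ) ∣ 3) := fun h => by have := Nat.le_of_dvd (by norm_num) h; omega
    have := (not_iff_not.mpr (ZMod.natCast_eq_zero_iff 3 p)).mpr h
    simpa using this
  have h1 : ∑ x : ZMod p, (x⁻¹)^2 = ∑ x : ZMod p, x^2 := by
    refine Finset.sum_nbij' (fun x : ZMod p => x⁻¹) (fun x : ZMod p => x⁻¹) ?_ ?_ ?_ ?_ ?_ <;>
      simp [inv_inv]
  have hb : ∑ x : ZMod p, x^2 = ∑ x : ZMod p, (2*x)^2 := by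
    refine Finset.sum_nbij' (fun x : ZMod p => 2⁻¹*x) (fun x : ZMod p => 2*x) ?_ ?_ ?_ ?_ ?_
    · intros; exact Finset.mem_univ _
    · intros; exact Finset.mem_univ _
    · intro a _; show 2 * (2⁻¹ * a) = a; rw [← mul_assoc, mul_inv_cancel₀ h2ne, one_mul]
    · intro a _; show 2⁻¹ * (2 * a) = a; rw [← mul_assoc, inv_mul_cancel₀ h2ne, one_mul]
    · intro a _; show a^2 = (2 * (2⁻¹ * a))^2; rw [← mul_assoc, mul_inv_cancel₀ h2ne, one_mul]
  have h2 : ∑ x : ZMod p, x^2 = 0 := by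
    have key : ∑ x : ZMod p, ((2*x)^2 - x^2) = 0 := by
      rw [Finset.sum_sub_distrib, ← hb, sub_self]
    have key2 : ∑ x : ZMod p, (3:ZMod p)*x^2 = 0 := by
      rw [← key]; apply Finset.sum_congr rfl; intros; ring
    rw [← Finset.mul_sum] at key2
    exact (mul_eq_zero.mp key2).resolve_left h3ne
  have h0 := sum_zmod_split p hp.one_lt (fun x : ZMod p => (x⁻¹)^2)
  simp only [h1, h2] at h0
  have : (0:ZMod p) = (0⁻¹:ZMod p)^2 + ∑ j ∈ Icc 1 (p-1), ((j:ZMod p)⁻¹)^2 := h0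
  simpa using this.symm

lemma wolstenholme (p : ℕ) (hp : p.Prime) (hp3 : 3 < p) :
    ∑ j ∈ Icc 1 (p-1), (j : ZMod (p^2))⁻¹ = 0 := by
  haveI : Fact p.Prime := ⟨hp⟩
  haveI : NeZero (p^2) := ⟨by positivity⟩
  have hplt : 1 < p := hp.one_lt
  have hdvd : p ∣ p^2 := dvd_pow_self p two_ne_zero
  set H := ∑ j ∈ Icc 1 (p-1), (j : ZMod (p^2))⁻¹ with hH
  have hu : ∀ j ∈ Icc 1 (p-1), IsUnit (j : ZMod (p^2)) := by
    intro j hj; simp only [mem_Icc] at hj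
    exact unit_of_not_dvd p 2 j hp (not_dvd_of_Icc p j hj.1 hj.2 hplt)
  have hu' : ∀ j ∈ Icc 1 (p-1), IsUnit (((p - j : ℕ)) : ZMod (p^2)) := by
    intro j hj; simp only [mem_Icc] at hj
    exact unit_of_not_dvd p 2 _ hp (not_dvd_of_Icc p (p-j) (by omega) (by omega) hplt)
  have step1 : H = ∑ j ∈ Icc 1 (p-1), (((p - j : ℕ)) : ZMod (p^2))⁻¹ := by
    rw [hH]
    refine Finset.sum_nbij' (fun j => p - j) (fun j => p - j) ?_ ?_ ?_ ?_ ?_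
    · intro a ha; simp only [mem_Icc] at ha ⊢; show 1 ≤ p - a ∧ p - a ≤ p - 1; omega
    · intro a ha; simp only [mem_Icc] at ha ⊢; show 1 ≤ p - a ∧ p - a ≤ p - 1; omega
    · intro a ha; simp only [mem_Icc] at ha; show p - (p - a) = a; omega
    · intro a ha; simp only [mem_Icc] at ha; show p - (p - a) = a; omega
    · intro a ha; simp only [mem_Icc] at ha
      show ((a:ℕ) : ZMod (p^2))⁻¹ = (((p - (p - a) : ℕ)) : ZMod (p^2))⁻¹
      rw [show p - (p - a) = a from by omega]
  set T := ∑ j ∈ Icc 1 (p-1), ((j : ZMod (p^2))⁻¹ * (((p - j : ℕ)) : ZMod (p^2))⁻¹) with hT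
  have step2 : H + H = (p : ZMod (p^2)) * T := by
    nth_rewrite 2 [step1]
    rw [hH, ← Finset.sum_add_distrib, hT, Finset.mul_sum]
    apply Finset.sum_congr rfl
    intro j hj
    have h1 := ZMod.mul_inv_of_unit _ (hu j hj)
    have h2 := ZMod.mul_inv_of_unit _ (hu' j hj)
    simp only [mem_Icc] at hj
    have hadd : ((j:ℕ) : ZMod (p^2)) + (((p - j:ℕ)) : ZMod (p^2)) = (p : ZMod (p^2)) := by
      rw [← Nat.cast_add, show j + (p - j) = p from by omega]
    rw [← hadd]
    generalize ((j:ℕ) : ZMod (p^2)) = u at h1 ⊢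
    generalize (((p - j:ℕ)) : ZMod (p^2)) = v at h2 ⊢
    calc u⁻¹ + v⁻¹ = (u * u⁻¹) * v⁻¹ + (v * v⁻¹) * u⁻¹ := by rw [h1, h2]; ring
      _ = (u + v) * (u⁻¹ * v⁻¹) := by ring
  have castT : ZMod.castHom hdvd (ZMod p) T = 0 := by
    rw [hT, map_sum]
    have hterm : ∀ j ∈ Icc 1 (p-1),
        ZMod.castHom hdvd (ZMod p)
          ((j : ZMod (p^2))⁻¹ * (((p - j : ℕ)) : ZMod (p^2))⁻¹)
        = -(((j : ZMod p)⁻¹)^2) := by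
      intro j hj
      rw [map_mul, cast_inv _ _ (hu j hj), cast_inv _ _ (hu' j hj)]
      simp only [mem_Icc] at hj
      have hneg : (((p - j : ℕ)) : ZMod p) = -(j : ZMod p) := by
        rw [Nat.cast_sub (le_trans hj.2 (Nat.sub_le p 1)), ZMod.natCast_self]; ring
      rw [hneg, inv_neg]
      ring
    rw [Finset.sum_congr rfl hterm, Finset.sum_neg_distrib, sum_sq_inv_zero p hp hp3, neg_zero]
  have hker : (p : ZMod (p^2)) * T = 0 :=
    ker_gen (p^2) p p (hm := hdvd) (by rw [pow_two]) T castT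
  have h2H : H + H = 0 := by rw [step2, hker]
  have h2u : IsUnit ((2:ℕ) : ZMod (p^2)) :=
    unit_of_not_dvd p 2 2 hp (fun h => by have := Nat.le_of_dvd (by norm_num) h; omega)
  have h2m : ((2:ℕ) : ZMod (p^2)) * H = ((2:ℕ) : ZMod (p^2)) * 0 := by
    push_cast
    rw [mul_zero, two_mul]; exact h2H
  exact h2u.mul_left_cancel h2m
lemma lemA (p : ℕ) (hp : p.Prime) (hp3 : 3 < p) :
    ∀ k, k ≤ p - 1 →
    ((Nat.choose (p+k) k * Nat.choose (p-1) k : ℕ) : ZMod (p^4))^2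
      = 1 - 2*(p:ZMod (p^4))^2 * ∑ j ∈ Icc 1 k, ((j : ZMod (p^4))⁻¹)^2 := by
  intro k
  induction k with
  | zero => intro _; simp
  | succ k IH =>
    intro hk1
    have hk : k ≤ p - 1 := by omega
    have IH' := IH hk
    set R := ZMod (p^4)
    set q : R := (p:R)^2 with hqdef
    have hq : q * q = 0 := by
      have h0 : ((p^4 : ℕ) : R) = 0 := ZMod.natCast_self _
      push_cast at h0
      rw [hqdef]; linear_combination h0
    set a : R := ((Nat.choose (p+k) k * Nat.choose (p-1) k : ℕ) : R) with ha
    set b : R := ((Nat.choose (p+(k+1)) (k+1) * Nat.choose (p-1) (k+1) : ℕ) : R) with hb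
    set c : R := (((k+1 : ℕ)) : R) with hc
    have hcu : IsUnit c := by
      apply unit_of_not_dvd p 4 (k+1) hp
      intro h; have := Nat.le_of_dvd (by omega) h; omega
    set i : R := c⁻¹ with hi
    have hinv : c * i = 1 := ZMod.mul_inv_of_unit _ hcu
    have hc2 : c^2 * i^2 = 1 := by rw [← mul_pow, hinv, one_pow]
    have hrec : b * c^2 = a * (q - c^2) := by
      have hnat := step_id p k
      have hcast : (((Nat.choose (p+(k+1)) (k+1) * Nat.choose (p-1) (k+1) * ((k+1)*(k+1)) : ℕ)) : R)
          = ((Nat.choose (p+k) k * Nat.choose (p-1) k * ((p+k+1)*((p-1)-k)) : ℕ) : R) := by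
        rw [hnat]
      have hsub : (((p-1)-k : ℕ) : R) = (p:R) - 1 - (k:R) := by
        rw [Nat.cast_sub hk, Nat.cast_sub (by omega : 1 ≤ p)]
        push_cast; ring
      rw [hb, ha, hc, hqdef]
      push_cast +zetaDelta [hsub] at hcast ⊢
      linear_combination hcast
    have hsq : b^2 * c^4 = a^2 * (q - c^2)^2 := by
      calc b^2 * c^4 = (b * c^2)^2 := by ring
        _ = (a * (q - c^2))^2 := by rw [hrec]
        _ = a^2 * (q - c^2)^2 := by ring
    have hSicc : ∑ j ∈ Icc 1 (k+1), ((j : R)⁻¹)^2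
        = (∑ j ∈ Icc 1 k, ((j : R)⁻¹)^2) + i^2 := by
      rw [Finset.sum_Icc_succ_top (by omega : 1 ≤ k+1)]
    set S : R := ∑ j ∈ Icc 1 k, ((j : R)⁻¹)^2 with hS
    rw [hSicc]
    have hcu4 : IsUnit (c^4) := hcu.pow 4
    apply hcu4.mul_left_cancel
    calc c^4 * b^2 = a^2 * (q - c^2)^2 := by linear_combination hsq
      _ = c^4 * (1 - 2*q*(S + i^2)) := by
          rw [IH']
          linear_combination (1 - 2*q*S + 4*S*c^2) * hq + (2*q*c^2) * hc2

lemma double_swap {M : Type*} [AddCommMonoid M] (N : ℕ) (f : ℕ → M) :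
    ∑ k ∈ range N, ∑ j ∈ Icc 1 k, f j = ∑ j ∈ Icc 1 (N-1), (N - j) • f j := by
  induction N with
  | zero => simp
  | succ N ih =>
    rw [Finset.sum_range_succ, ih]
    cases N with
    | zero => simp
    | succ M =>
      rw [show M + 1 + 1 - 1 = M + 1 from rfl, show M + 1 - 1 = M from rfl]
      rw [Finset.sum_Icc_succ_top (by omega : 1 ≤ M+1),
          Finset.sum_Icc_succ_top (by omega : 1 ≤ M+1),
          show M + 1 + 1 - (M+1) = 1 from by omega, one_smul]
      have hper : ∀ j ∈ Icc 1 M, (M + 1 + 1 - j) • f j = (M + 1 - j) • f j + f j := by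
        intro j hj
        simp only [mem_Icc] at hj
        rw [show M + 1 + 1 - j = (M + 1 - j) + 1 from by omega, succ_nsmul]
      rw [Finset.sum_congr rfl hper, Finset.sum_add_distrib]
      abel

theorem stmt16 (p : ℕ) (hp : p.Prime) (hp3 : 3 < p) :
    (∑ k ∈ Finset.range p, (Nat.choose (p + k) k) ^ 2 * (Nat.choose (p - 1) k) ^ 2) ≡
      p [MOD 2 * p ^ 4] := by
  have hplt : 1 < p := hp.one_lt
  haveI : NeZero (p^4) := ⟨by positivity⟩
  -- parity part
  have h2p : ¬ (2 ∣ p) := by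
    intro h
    have := (Nat.prime_dvd_prime_iff_eq Nat.prime_two hp).mp h
    omega
  have hS2 : (∑ k ∈ Finset.range p, (Nat.choose (p + k) k) ^ 2 * (Nat.choose (p - 1) k) ^ 2) ≡
      p [MOD 2] := by
    set f : ℕ → ℕ := fun k => (Nat.choose (p + k) k) ^ 2 * (Nat.choose (p - 1) k) ^ 2 with hf
    obtain ⟨m, hm⟩ : 2 ∣ ∑ i ∈ range (p-1), f (i+1) := by
      apply Finset.dvd_sum
      intro i hi
      simp only [mem_range] at hi
      have h := term_even p (i+1) hp hp3 (by omega) (by omega)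
      have : f (i+1) = (Nat.choose (p+(i+1)) (i+1) * Nat.choose (p-1) (i+1))^2 := by
        rw [hf]; ring
      rw [this]
      exact dvd_pow h (by norm_num)
    have hS : ∑ k ∈ range p, f k = (∑ i ∈ range (p-1), f (i+1)) + f 0 := by
      conv_lhs => rw [show p = p-1+1 from by omega]
      exact Finset.sum_range_succ' f (p-1)
    have hf0 : f 0 = 1 := by rw [hf]; simp
    show (∑ k ∈ range p, f k) % 2 = p % 2
    omega
  -- mod p^4 part
  have hS4 : (∑ k ∈ Finset.range p, (Nat.choose (p + k) k) ^ 2 * (Nat.choose (p - 1) k) ^ 2) ≡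
      p [MOD p^4] := by
    rw [← ZMod.natCast_eq_natCast_iff]
    have hcast : ((∑ k ∈ range p, (Nat.choose (p+k) k)^2 * (Nat.choose (p-1) k)^2 : ℕ) : ZMod (p^4))
        = ∑ k ∈ range p, ((Nat.choose (p+k) k * Nat.choose (p-1) k : ℕ) : ZMod (p^4))^2 := by
      push_cast
      apply Finset.sum_congr rfl
      intros; ring
    rw [hcast]
    have hlem : ∀ k ∈ range p, ((Nat.choose (p+k) k * Nat.choose (p-1) k : ℕ) : ZMod (p^4))^2
        = 1 - 2*(p:ZMod (p^4))^2 * ∑ j ∈ Icc 1 k, ((j : ZMod (p^4))⁻¹)^2 := by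
      intro k hk
      simp only [mem_range] at hk
      exact lemA p hp hp3 k (by omega)
    rw [Finset.sum_congr rfl hlem, Finset.sum_sub_distrib, Finset.sum_const, Finset.card_range,
        nsmul_eq_mul, mul_one, ← Finset.mul_sum,
        double_swap p (fun j => ((j : ZMod (p^4))⁻¹)^2)]
    set T2 := ∑ j ∈ Icc 1 (p-1), ((j : ZMod (p^4))⁻¹)^2 with hT2
    set H1 := ∑ j ∈ Icc 1 (p-1), (j : ZMod (p^4))⁻¹ with hH1
    have hsum : ∑ j ∈ Icc 1 (p-1), (p - j) • ((j : ZMod (p^4))⁻¹)^2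
        = (p:ZMod (p^4)) * T2 - H1 := by
      rw [hT2, hH1, Finset.mul_sum, ← Finset.sum_sub_distrib]
      apply Finset.sum_congr rfl
      intro j hj
      simp only [mem_Icc] at hj
      have hju : IsUnit ((j:ℕ) : ZMod (p^4)) :=
        unit_of_not_dvd p 4 j hp (not_dvd_of_Icc p j hj.1 hj.2 hplt)
      have hinv := ZMod.mul_inv_of_unit _ hju
      rw [nsmul_eq_mul, Nat.cast_sub (le_trans hj.2 (Nat.sub_le p 1))]
      linear_combination (-(((j:ℕ) : ZMod (p^4))⁻¹)) * hinv
    rw [hsum]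
    have hdvd1 : p ∣ p^4 := dvd_pow_self p (by norm_num)
    have hdvd2 : p^2 ∣ p^4 := pow_dvd_pow p (by norm_num)
    have hc1 : ((p^3:ℕ) : ZMod (p^4)) * T2 = 0 := by
      apply ker_gen (p^4) p (p^3) hdvd1 (by ring)
      rw [hT2, map_sum]
      have hterm : ∀ j ∈ Icc 1 (p-1),
          ZMod.castHom hdvd1 (ZMod p) (((j : ZMod (p^4))⁻¹)^2) = ((j : ZMod p)⁻¹)^2 := by
        intro j hj
        simp only [mem_Icc] at hj
        have hju : IsUnit ((j:ℕ) : ZMod (p^4)) :=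
          unit_of_not_dvd p 4 j hp (not_dvd_of_Icc p j hj.1 hj.2 hplt)
        rw [map_pow, cast_inv _ _ hju]
      rw [Finset.sum_congr rfl hterm]
      exact sum_sq_inv_zero p hp hp3
    have hc2 : ((p^2:ℕ) : ZMod (p^4)) * H1 = 0 := by
      apply ker_gen (p^4) (p^2) (p^2) hdvd2 (by ring)
      rw [hH1, map_sum]
      have hterm : ∀ j ∈ Icc 1 (p-1),
          ZMod.castHom hdvd2 (ZMod (p^2)) ((j : ZMod (p^4))⁻¹) = (j : ZMod (p^2))⁻¹ := by
        intro j hj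
        simp only [mem_Icc] at hj
        have hju : IsUnit ((j:ℕ) : ZMod (p^4)) :=
          unit_of_not_dvd p 4 j hp (not_dvd_of_Icc p j hj.1 hj.2 hplt)
        exact cast_inv _ _ hju
      rw [Finset.sum_congr rfl hterm]
      exact wolstenholme p hp hp3
    push_cast at hc1 hc2
    linear_combination (-2 : ZMod (p^4)) * hc1 + (2 : ZMod (p^4)) * hc2
  have hco : Nat.Coprime 2 (p^4) :=
    Nat.Coprime.pow_right _ ((Nat.coprime_primes Nat.prime_two hp).mpr (by omega))
  exact (Nat.modEq_and_modEq_iff_modEq_mul hco).mp ⟨hS2, hS4⟩
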